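/- Let (t₁,t₂) be a q-Weyl pair in A. Then (s₁,s₂) := (q t₁⁻¹ t₂, t₁⁻¹) is again a q-Weyl pair, i.e. s₁s₂ = q² s₂ s₁, and the transformation B(t₁,t₂) := (q t₁⁻¹ t₂, t₁⁻¹) satisfies B ∘ B ∘ B = id, i.e. applying B three times to any q-Weyl pair returns the original pair. -/

import Mathlib

/-- A `q`-Weyl pair: both components are invertible and `a₁a₂ = q²a₂a₁`. -/
def IsWeylPair {A : Type*} [Ring A] (q : A) (a : A × A) : Prop :=
  IsUnit a.1 ∧ IsUnit a.2 ∧ a.1 * a.2 = q ^ 2 * (a.2 * a.1)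

/-- The quantum change-of-decoration transformation `B(t₁,t₂) := (q t₁⁻¹ t₂, t₁⁻¹)`,
with the inverse taken via `Ring.inverse`. -/
noncomputable def Bmap {A : Type*} [Ring A] (q : A) (t : A × A) : A × A :=
  (q * Ring.inverse t.1 * t.2, Ring.inverse t.1)

private lemma ringInverse_eq {A : Type*} [Ring A] {x y : A} (h1 : x * y = 1) (h2 : y * x = 1) :
    Ring.inverse x = y :=
  Ring.inverse_unit ⟨x, y, h1, h2⟩

/-- For a `q`-Weyl pair `(t₁,t₂)` (with `q` central and invertible), the pair
`B(t₁,t₂) = (q t₁⁻¹ t₂, t₁⁻¹)` is again a `q`-Weyl pair, and `B` has order three: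
`B(B(B(t))) = t`. -/
theorem quantum_change_of_decoration_order_three {A : Type*} [Ring A] (q : A)
    (hq : IsUnit q) (hqc : ∀ a : A, Commute q a)
    (t : A × A) (ht : IsWeylPair q t) :
    IsWeylPair q (Bmap q t) ∧ Bmap q (Bmap q (Bmap q t)) = t := by
  obtain ⟨a, b⟩ := t
  obtain ⟨hu, hv, hw⟩ := ht
  simp only at hu hv hw
  set a' := Ring.inverse a with ha'
  set b' := Ring.inverse b with hb'
  set q' := Ring.inverse q with hq'
  have ha1 : a * a' = 1 := Ring.mul_inverse_cancel a hu
  have ha2 : a' * a = 1 := Ring.inverse_mul_cancel a hu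
  have hb1 : b * b' = 1 := Ring.mul_inverse_cancel b hv
  have hb2 : b' * b = 1 := Ring.inverse_mul_cancel b hv
  have hq1 : q * q' = 1 := Ring.mul_inverse_cancel q hq
  have hq2 : q' * q = 1 := Ring.inverse_mul_cancel q hq
  -- tail cancellation lemmas
  have cA : ∀ x : A, a * (a' * x) = x := fun x => by rw [← mul_assoc, ha1, one_mul]
  have cA' : ∀ x : A, a' * (a * x) = x := fun x => by rw [← mul_assoc, ha2, one_mul]
  have cB : ∀ x : A, b * (b' * x) = x := fun x => by rw [← mul_assoc, hb1, one_mul]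
  have cB' : ∀ x : A, b' * (b * x) = x := fun x => by rw [← mul_assoc, hb2, one_mul]
  have cQ : ∀ x : A, q * (q' * x) = x := fun x => by rw [← mul_assoc, hq1, one_mul]
  have cQ' : ∀ x : A, q' * (q * x) = x := fun x => by rw [← mul_assoc, hq2, one_mul]
  -- q commutes, and q' commutes
  have hcq : ∀ x y : A, x * (q * y) = q * (x * y) := fun x y => by
    rw [← mul_assoc, ← hqc x, mul_assoc]
  have hq'c : ∀ x : A, q' * x = x * q' := fun x => by
    calc q' * x = q' * (x * (q * q')) := by rw [hq1, mul_one]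
      _ = q' * (q * (x * q')) := by rw [hcq]
      _ = x * q' := cQ' _
  have hcq' : ∀ x y : A, x * (q' * y) = q' * (x * y) := fun x y => by
    rw [← mul_assoc, ← hq'c x, mul_assoc]
  have cQr : ∀ x : A, q * (x * q') = x := fun x => by rw [← hq'c, cQ]
  -- Weyl relation rewritten
  have hw' : a * b = q * (q * (b * a)) := by rw [hw, pow_two, mul_assoc]
  have kb0 : b * a' = q * (q * (a' * b)) := by
    calc b * a' = a' * (a * (b * a')) := (cA' _).symm
      _ = a' * ((a * b) * a') := by rw [mul_assoc]
      _ = a' * ((q * (q * (b * a))) * a') := by rw [hw']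
      _ = q * (q * (a' * b)) := by
          simp only [mul_assoc, hcq]
          rw [ha1, mul_one]
  have hia' : Ring.inverse a' = a := ringInverse_eq ha2 ha1
  have hic : Ring.inverse (q * a' * b) = b' * (a * q') := by
    refine ringInverse_eq ?_ ?_
    · simp only [mul_assoc, cB, cA']; exact hq1
    · simp only [mul_assoc, cQ', cA]; exact hb2
  have hic2 : Ring.inverse (q * (b' * (a * q')) * a') = b := by
    refine ringInverse_eq ?_ ?_
    · simp only [mul_assoc, hcq', cQ, cQ', cA, ha1, mul_one]; exact hb2
    · simp only [mul_assoc]; rw [hcq]; simp only [cB, mul_assoc, hcq', cQ, cQ']; exact ha1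
  constructor
  · refine ⟨(hq.mul (isUnit_ringInverse.mpr hu)).mul hv, isUnit_ringInverse.mpr hu, ?_⟩
    show q * a' * b * a' = q ^ 2 * (a' * (q * a' * b))
    simp only [pow_two, mul_assoc]
    rw [kb0]
    simp only [hcq]
  · show Bmap q (Bmap q (q * a' * b, a')) = (a, b)
    have e2 : Bmap q (q * a' * b, a') = (q * (b' * (a * q')) * a', b' * (a * q')) := by
      simp only [Bmap, hic]
    rw [e2]
    show (q * Ring.inverse (q * (b' * (a * q')) * a') * (b' * (a * q')),
      Ring.inverse (q * (b' * (a * q')) * a')) = (a, b)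
    rw [hic2]
    refine Prod.ext ?_ rfl
    show q * b * (b' * (a * q')) = a
    simp only [mul_assoc, cB, cQr]
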